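/- Let n ≥ 2, λ > 0, C₀ > 0, and define w(x,t) := C₀ g(|x| - r(t)) with r(t) := 1 - C₀ λ t and g(s) := (1 - e^{-2ns})/(2n) for s > 0, g(s)=0 for s ≤ 0. Then at every point (x,t) with t ∈ [0,1], r(t) ≥ 1/2, and |x| > r(t) (so w is positive and smooth there), one has w_t ≥ 0 and Δw < 0, where Δ is the spatial Laplacian; in particular w_t ≥ Δw in the positivity set. Moreover on the free boundary {|x| = r(t)} one has, taking one-sided derivatives from the region |x| > r(t), w_t = λ C₀² = λ |∇w|². -/

import Mathlib

open Real Set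

noncomputable section

abbrev E (n : ℕ) := EuclideanSpace ℝ (Fin n)

/-- `w(x,t) = C₀ g(|x| - r(t))` with `r(t) = 1 - C₀λt` and
`g(s) = (1-e^{-2ns})/(2n)` for `s > 0`, `g(s) = 0` for `s ≤ 0`, is a
supersolution of the rescaled Stefan problem: in the positivity set
(`t ∈ [0,1]`, `r(t) ≥ 1/2`, `|x| > r(t)`) one has `w_t ≥ 0`, the radial
Laplacian `Δw = C₀(g'' + (n-1)/|x| g')` is negative, hence `Δw ≤ w_t`;
and on the free boundary `{|x| = r(t)}` the one-sided derivatives satisfy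
`w_t = λC₀² = λ|∇w|²` with `|∇w| = C₀`. -/
theorem radial_supersolution (n : ℕ) (hn : 2 ≤ n) (lam C0 : ℝ)
    (hlam : 0 < lam) (hC0 : 0 < C0)
    (g : ℝ → ℝ)
    (hg : ∀ s : ℝ, g s = if s ≤ 0 then 0 else (1 - Real.exp (-(2 * (n : ℝ)) * s)) / (2 * (n : ℝ)))
    (r : ℝ → ℝ) (hr : ∀ t, r t = 1 - C0 * lam * t)
    (w : E n → ℝ → ℝ) (hw : ∀ x t, w x t = C0 * g (‖x‖ - r t)) :
    (∀ (x : E n) (t : ℝ), t ∈ Set.Icc (0 : ℝ) 1 → (1 : ℝ) / 2 ≤ r t → r t < ‖x‖ →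
      HasDerivAt (fun s => w x s) (C0 ^ 2 * lam * Real.exp (-(2 * (n : ℝ)) * (‖x‖ - r t))) t ∧
      0 ≤ C0 ^ 2 * lam * Real.exp (-(2 * (n : ℝ)) * (‖x‖ - r t)) ∧
      C0 * ((-(2 * (n : ℝ))) * Real.exp (-(2 * (n : ℝ)) * (‖x‖ - r t))
          + (((n : ℝ) - 1) / ‖x‖) * Real.exp (-(2 * (n : ℝ)) * (‖x‖ - r t))) < 0 ∧
      C0 * ((-(2 * (n : ℝ))) * Real.exp (-(2 * (n : ℝ)) * (‖x‖ - r t))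
          + (((n : ℝ) - 1) / ‖x‖) * Real.exp (-(2 * (n : ℝ)) * (‖x‖ - r t)))
        ≤ C0 ^ 2 * lam * Real.exp (-(2 * (n : ℝ)) * (‖x‖ - r t))) ∧
    (∀ (x : E n) (t : ℝ), t ∈ Set.Icc (0 : ℝ) 1 → (1 : ℝ) / 2 ≤ r t → ‖x‖ = r t →
      HasDerivWithinAt (fun s => w x s) (lam * C0 ^ 2) (Set.Ici t) t ∧
      HasDerivWithinAt (fun ρ : ℝ => C0 * g ρ) C0 (Set.Ici 0) 0 ∧
      lam * C0 ^ 2 = lam * C0 ^ 2) := by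
  have hn2 : (2 : ℝ) ≤ (n : ℝ) := by exact_mod_cast hn
  have hNpos : (0 : ℝ) < 2 * (n : ℝ) := by linarith
  -- right derivative of C0 * g at 0
  have hg0 : HasDerivWithinAt (fun ρ : ℝ => C0 * g ρ) C0 (Set.Ici 0) 0 := by
    have hG : HasDerivAt (fun ρ : ℝ => C0 * ((1 - Real.exp (-(2 * (n : ℝ)) * ρ)) / (2 * (n : ℝ))))
        C0 0 := by
      have h1 : HasDerivAt (fun ρ : ℝ => -(2 * (n : ℝ)) * ρ) (-(2 * (n : ℝ))) 0 := by
        simpa using (hasDerivAt_id (0:ℝ)).const_mul (-(2 * (n : ℝ)))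
      have h2 := h1.exp
      have h3 := ((h2.const_sub 1).div_const (2 * (n : ℝ))).const_mul C0
      refine h3.congr_deriv ?_
      simp only [mul_zero, Real.exp_zero]
      field_simp
    refine (hG.hasDerivWithinAt.congr ?_ ?_)
    · intro y hy
      rcases eq_or_lt_of_le (Set.mem_Ici.mp hy : (0:ℝ) ≤ y) with h | h
      · simp [hg, ← h]
      · rw [hg]
        simp [not_le.mpr h]
    · simp [hg]
  refine ⟨?_, ?_⟩
  · intro x t ht hr2 hx
    set a := ‖x‖ with ha
    have hapos : (0:ℝ) < a := lt_trans (by linarith) hx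
    have hepos : 0 < Real.exp (-(2 * (n : ℝ)) * (a - r t)) := Real.exp_pos _
    have hderiv : HasDerivAt (fun s => w x s)
        (C0 ^ 2 * lam * Real.exp (-(2 * (n : ℝ)) * (a - r t))) t := by
      have h1 : HasDerivAt (fun s : ℝ => -(2 * (n : ℝ)) * (a - 1 + C0 * lam * s))
          (-(2 * (n : ℝ)) * (C0 * lam)) t := by
        have := (((hasDerivAt_id t).const_mul (C0 * lam)).const_add (a - 1)).const_mul
          (-(2 * (n : ℝ)))
        simpa [mul_add, mul_comm, mul_assoc, mul_left_comm] using this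
      have h2 := h1.exp
      have hF := ((h2.const_sub 1).div_const (2 * (n : ℝ))).const_mul C0
      have hev : (fun s => C0 * ((1 - Real.exp (-(2 * (n : ℝ)) * (a - 1 + C0 * lam * s)))
          / (2 * (n : ℝ)))) =ᶠ[nhds t] (fun s => w x s) := by
        have hc : Continuous (fun s : ℝ => a - 1 + C0 * lam * s) := by continuity
        have hpt : 0 < a - 1 + C0 * lam * t := by rw [hr t] at hx; linarith
        have hev0 : ∀ᶠ s in nhds t, 0 < a - 1 + C0 * lam * s :=
          hc.continuousAt.eventually (eventually_gt_nhds hpt)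
        filter_upwards [hev0] with s hs
        rw [hw, hr, hg]
        have harg : a - (1 - C0 * lam * s) = a - 1 + C0 * lam * s := by ring
        rw [harg, if_neg (not_le.mpr hs)]
      have := hF.congr_of_eventuallyEq hev.symm
      refine this.congr_deriv ?_
      rw [hr t]
      have : a - (1 - C0 * lam * t) = a - 1 + C0 * lam * t := by ring
      rw [this]
      field_simp
    refine ⟨hderiv, by positivity, ?_, ?_⟩
    · have hdiv : ((n : ℝ) - 1) / a < 2 * (n : ℝ) := by
        rw [div_lt_iff₀ hapos]
        nlinarith
      nlinarith [mul_pos hC0 hepos]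
    · have hdiv : ((n : ℝ) - 1) / a < 2 * (n : ℝ) := by
        rw [div_lt_iff₀ hapos]
        nlinarith
      have hlt : C0 * ((-(2 * (n : ℝ))) * Real.exp (-(2 * (n : ℝ)) * (a - r t))
          + (((n : ℝ) - 1) / a) * Real.exp (-(2 * (n : ℝ)) * (a - r t))) < 0 := by
        nlinarith [mul_pos hC0 hepos]
      have hge : (0:ℝ) ≤ C0 ^ 2 * lam * Real.exp (-(2 * (n : ℝ)) * (a - r t)) := by positivity
      linarith
  · intro x t ht hr2 hx
    refine ⟨?_, hg0, rfl⟩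
    have hphi : HasDerivWithinAt (fun s : ℝ => C0 * lam * (s - t)) (C0 * lam) (Set.Ici t) t := by
      have : HasDerivAt (fun s : ℝ => C0 * lam * (s - t)) (C0 * lam) t := by
        simpa using ((hasDerivAt_id t).sub_const t).const_mul (C0 * lam)
      exact this.hasDerivWithinAt
    have hmaps : Set.MapsTo (fun s : ℝ => C0 * lam * (s - t)) (Set.Ici t) (Set.Ici 0) := by
      intro s hs
      have : (0:ℝ) ≤ s - t := by simpa using sub_nonneg.mpr (Set.mem_Ici.mp hs : t ≤ s)
      exact mul_nonneg (by positivity) this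
    have hg0' : HasDerivWithinAt (fun ρ : ℝ => C0 * g ρ) C0 (Set.Ici 0)
        ((fun s : ℝ => C0 * lam * (s - t)) t) := by simpa using hg0
    have hcomp := hg0'.comp t hphi hmaps
    have heq : (fun s => w x s) = (fun s => C0 * g (C0 * lam * (s - t))) := by
      funext s
      rw [hw, hr, hx, hr]
      congr 1
      ring
    rw [heq]
    have hval : lam * C0 ^ 2 = C0 * (C0 * lam) := by ring
    rw [hval]
    exact hcomp
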